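/- (Harary's balance theorem, cycle form) A signed graph is balanced — i.e., its vertex set can be partitioned into at most two sets such that every positive edge lies within a set and every negative edge lies between the two sets — if and only if every cycle of the graph contains an even number of negative edges. -/

import Mathlib

open SimpleGraph

variable {V : Type} {G : SimpleGraph V}

/-- number of negative darts of a walk -/
def negC (σ : V → V → ℤ) {u v : V} (w : G.Walk u v) : ℕ :=
  w.darts.countP (fun d => σ d.toProd.1 d.toProd.2 = -1)

lemma negC_nil (σ : V → V → ℤ) {u : V} : negC σ (Walk.nil : G.Walk u u) = 0 := rfl

lemma negC_cons (σ : V → V → ℤ) {u v w : V} (h : G.Adj u v) (p : G.Walk v w) :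
    negC σ (Walk.cons h p) = (if σ u v = -1 then 1 else 0) + negC σ p := by
  simp [negC, Walk.darts_cons, List.countP_cons, Nat.add_comm]

lemma negC_append (σ : V → V → ℤ) {u v w : V} (p : G.Walk u v) (q : G.Walk v w) :
    negC σ (p.append q) = negC σ p + negC σ q := by
  simp [negC, Walk.darts_append, List.countP_append]

lemma negC_reverse (σ : V → V → ℤ) (hsymm : ∀ u v, σ u v = σ v u) {u v : V} (p : G.Walk u v) :
    negC σ p.reverse = negC σ p := by
  simp only [negC, Walk.darts_reverse, List.countP_reverse, List.countP_map]
  congr 1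
  funext d
  simp [Function.comp, SimpleGraph.Dart.symm, hsymm d.toProd.2 d.toProd.1]

lemma dart_split {u v : V} (p : G.Walk u v) (d : G.Dart) (hd : d ∈ p.darts) :
    ∃ (p1 : G.Walk u d.toProd.1) (p2 : G.Walk d.toProd.2 v),
      p = p1.append (Walk.cons d.adj p2) := by
  induction p with
  | nil => simp at hd
  | cons h q ih =>
    rw [Walk.darts_cons, List.mem_cons] at hd
    rcases hd with hd | hd
    · subst hd
      exact ⟨Walk.nil, q, rfl⟩
    · obtain ⟨p1, p2, hp⟩ := ih hd
      exact ⟨Walk.cons h p1, p2, by rw [hp]; rfl⟩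

lemma even_closed [DecidableEq V] (σ : V → V → ℤ) (hsymm : ∀ u v, σ u v = σ v u)
    (hcyc : ∀ (u : V) (w : G.Walk u u), w.IsCycle → Even (negC σ w)) :
    ∀ (n : ℕ) (u : V) (w : G.Walk u u), w.length ≤ n → Even (negC σ w) := by
  intro n
  induction n with
  | zero =>
    intro u w hw
    cases w with
    | nil => simp [negC_nil]
    | cons h p => simp [Walk.length_cons] at hw
  | succ n ih =>
    intro u w hw
    cases w with
    | nil => simp [negC_nil]
    | cons h p =>
      rename_i v
      rw [Walk.length_cons, Nat.succ_le_succ_iff] at hw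
      by_cases hnd : p.support.Nodup
      · by_cases he : s(u, v) ∈ p.edges
        · obtain ⟨d, hd, hde⟩ := List.mem_map.mp he
          obtain ⟨p1, p2, hp⟩ := dart_split p d hd
          obtain ⟨⟨a, b⟩, hab⟩ := d
          rw [SimpleGraph.Dart.edge_mk] at hde
          rw [Sym2.eq_iff] at hde
          have hlen := congrArg Walk.length hp
          rw [Walk.length_append, Walk.length_cons] at hlen
          rcases hde with ⟨rfl, rfl⟩ | ⟨rfl, rfl⟩
          · have h1 : Even (negC σ (Walk.cons h p1)) := by
              apply ih; rw [Walk.length_cons]; omega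
            have h2 : Even (negC σ (Walk.cons hab p2)) := by
              apply ih; rw [Walk.length_cons]; omega
            rw [negC_cons] at h1 h2
            rw [negC_cons, hp, negC_append, negC_cons]
            dsimp only at h1 h2 ⊢
            obtain ⟨k1, e1⟩ := h1
            obtain ⟨k2, e2⟩ := h2
            exact ⟨k1 + k2, by omega⟩
          · have h1 : Even (negC σ p1) := by apply ih; omega
            have h2 : Even (negC σ p2) := by apply ih; omega
            rw [negC_cons, hp, negC_append, negC_cons]
            dsimp only at *
            have hss : σ a b = σ b a := hsymm a b
            rw [hss]
            obtain ⟨k1, e1⟩ := h1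
            obtain ⟨k2, e2⟩ := h2
            exact ⟨(if σ b a = -1 then 1 else 0) + k1 + k2, by omega⟩
        · exact hcyc u _ ((Walk.cons_isCycle_iff p h).mpr ⟨Walk.IsPath.mk' hnd, he⟩)
      · obtain ⟨x, hdup⟩ := List.exists_duplicate_iff_not_nodup.mpr hnd
        have hx : x ∈ p.support := hdup.mem
        have h2c : 2 ≤ p.support.count x := List.duplicate_iff_two_le_count.mp hdup
        have hspec := p.take_spec hx
        have hcount := p.count_support_takeUntil_eq_one hx
        have hxq2 : x ∈ (p.dropUntil x hx).support.tail := by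
          rw [← hspec, Walk.support_append, List.count_append, hcount] at h2c
          have : 0 < ((p.dropUntil x hx).support.tail).count x := by omega
          exact List.count_pos_iff.mp this
        have hlen := congrArg Walk.length hspec
        rw [Walk.length_append] at hlen
        set q2 := p.dropUntil x hx with hq2
        clear_value q2
        cases q2 with
        | nil => simp at hxq2
        | cons h2 r =>
          rename_i y
          have hxr : x ∈ r.support := by simpa [Walk.support_cons] using hxq2
          have hrspec := r.take_spec hxr
          have hrlen := congrArg Walk.length hrspec
          rw [Walk.length_append] at hrlen
          rw [Walk.length_cons] at hlen
          have h1 : Even (negC σ (Walk.cons h2 (r.takeUntil x hxr))) := by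
            apply ih; rw [Walk.length_cons]; omega
          have h2e : Even (negC σ (Walk.cons h ((p.takeUntil x hx).append (r.dropUntil x hxr)))) := by
            apply ih; rw [Walk.length_cons, Walk.length_append]; omega
          rw [negC_cons] at h1
          rw [negC_cons, negC_append] at h2e
          rw [negC_cons, ← hspec, negC_append, negC_cons, ← hrspec, negC_append]
          obtain ⟨k1, e1⟩ := h1
          obtain ⟨k2, e2⟩ := h2e
          exact ⟨k1 + k2, by omega⟩

lemma parity_walk_eq [DecidableEq V] (σ : V → V → ℤ) (hsymm : ∀ u v, σ u v = σ v u)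
    (hcyc : ∀ (u : V) (w : G.Walk u u), w.IsCycle → Even (negC σ w))
    {a b : V} (p q : G.Walk a b) : (Even (negC σ p) ↔ Even (negC σ q)) := by
  have h := even_closed σ hsymm hcyc (p.append q.reverse).length a (p.append q.reverse) le_rfl
  rw [negC_append, negC_reverse σ hsymm] at h
  exact Nat.even_add.mp h

lemma walk_parity (σ : V → V → ℤ)
    (hsign : ∀ u v, G.Adj u v → σ u v = 1 ∨ σ u v = -1)
    (c : V → Bool)
    (hc : ∀ u v, G.Adj u v → (σ u v = 1 → c u = c v) ∧ (σ u v = -1 → c u ≠ c v)) :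
    ∀ {a b : V} (w : G.Walk a b), (Even (negC σ w) ↔ c a = c b) := by
  intro a b w
  induction w with
  | nil => simp [negC_nil]
  | @cons x y z h p ihp =>
    rw [negC_cons]
    rcases hsign _ _ h with h1 | h1
    · have hcc := (hc _ _ h).1 h1
      rw [if_neg (by rw [h1]; decide), hcc, Nat.zero_add]
      exact ihp
    · have hcc := (hc _ _ h).2 h1
      rw [if_pos h1, Nat.add_comm, Nat.even_add_one, ihp]
      revert hcc
      cases hx : c x <;> cases hy : c y <;> cases hz : c z <;> simp

theorem harary_balance {V : Type} [Fintype V] [DecidableEq V]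
    (G : SimpleGraph V) [DecidableRel G.Adj]
    (σ : V → V → ℤ)
    (hsymm : ∀ u v, σ u v = σ v u)
    (hsign : ∀ u v, G.Adj u v → σ u v = 1 ∨ σ u v = -1) :
    (∃ c : V → Bool, ∀ u v, G.Adj u v →
        (σ u v = 1 → c u = c v) ∧ (σ u v = -1 → c u ≠ c v)) ↔
      ∀ (u : V) (w : G.Walk u u), w.IsCycle →
        Even (w.darts.countP (fun d => σ d.toProd.1 d.toProd.2 = -1)) := by
  classical
  constructor
  · rintro ⟨c, hc⟩ u w hw
    exact (walk_parity σ hsign c hc w).mpr rfl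
  · intro hcyc
    have hcyc' : ∀ (u : V) (w : G.Walk u u), w.IsCycle → Even (negC σ w) := hcyc
    let rep : G.ConnectedComponent → V := fun cc => (Quot.exists_rep cc).choose
    have hrep : ∀ v : V, G.Reachable (rep (G.connectedComponentMk v)) v := fun v =>
      SimpleGraph.ConnectedComponent.exact
        (Quot.exists_rep (G.connectedComponentMk v)).choose_spec
    let wlk : ∀ v : V, G.Walk (rep (G.connectedComponentMk v)) v := fun v => (hrep v).some
    refine ⟨fun v => decide (Even (negC σ (wlk v))), ?_⟩
    intro u v huv
    have hco : G.connectedComponentMk u = G.connectedComponentMk v :=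
      SimpleGraph.ConnectedComponent.sound huv.reachable
    have hout : rep (G.connectedComponentMk u) = rep (G.connectedComponentMk v) := by rw [hco]
    have hpar := parity_walk_eq σ hsymm hcyc' (wlk v)
      (((wlk u).append (Walk.cons huv Walk.nil)).copy hout rfl)
    have hnegcopy : negC σ ((((wlk u).append (Walk.cons huv Walk.nil)).copy hout rfl)) =
        negC σ (wlk u) + (if σ u v = -1 then 1 else 0) := by
      simp only [negC, Walk.darts_copy, Walk.darts_append, Walk.darts_cons, Walk.darts_nil,
        List.countP_append, List.countP_cons, List.countP_nil]
      split <;> simp_all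
    rw [hnegcopy] at hpar
    constructor
    · intro h1
      rw [if_neg (by rw [h1]; decide), Nat.add_zero] at hpar
      simp only [decide_eq_decide]
      exact hpar.symm
    · intro h1
      rw [if_pos h1, Nat.even_add_one] at hpar
      simp only [ne_eq, decide_eq_decide]
      intro hq
      rw [hq] at hpar
      tauto
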